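/- Let F and V be finite nonempty subsets of EuclideanSpace ℝ (Fin m) and let ε ≥ 0. If g_F(w) − g_V(w) ≤ ε for every corner weight w of V, then g_F(w) − g_V(w) ≤ ε for every w in the weight simplex W_m; that is, if no corner weight admits a utility improvement greater than ε, then V is an ε-CCS (and for ε = 0, V is a CCS). -/

import Mathlib

open scoped RealInnerProductSpace

/-- The scalarized value function `g_V(w) = max_{v ∈ V} ⟪v, w⟫`. -/
noncomputable def gVal {m : ℕ} (V : Set (EuclideanSpace ℝ (Fin m)))
    (w : EuclideanSpace ℝ (Fin m)) : ℝ :=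
  sSup ((fun v => ⟪v, w⟫) '' V)

/-- The weight simplex `W_m`. -/
def weightSimplex (m : ℕ) : Set (EuclideanSpace ℝ (Fin m)) :=
  {w | (∀ i, 0 ≤ w i) ∧ ∑ i, w i = 1}

/-- The polyhedron `P(V)` whose vertices give the corner weights of `V`. -/
def cornerPolyhedron {m : ℕ} (V : Set (EuclideanSpace ℝ (Fin m))) :
    Set (EuclideanSpace ℝ (Fin m) × ℝ) :=
  {x | x.1 ∈ weightSimplex m ∧ ∀ v ∈ V, ⟪v, x.1⟫ ≤ x.2}

/-- `w` is a corner weight of `V` if `w` is in the weight simplex and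
`(w, g_V(w))` is an extreme point of the polyhedron `P(V)`. -/
def IsCornerWeight {m : ℕ} (V : Set (EuclideanSpace ℝ (Fin m)))
    (w : EuclideanSpace ℝ (Fin m)) : Prop :=
  w ∈ weightSimplex m ∧ (w, gVal V w) ∈ (cornerPolyhedron V).extremePoints ℝ

private lemma le_gVal_aux {m : ℕ} {V : Set (EuclideanSpace ℝ (Fin m))} (hVfin : V.Finite)
    {v : EuclideanSpace ℝ (Fin m)} (hv : v ∈ V) (w : EuclideanSpace ℝ (Fin m)) :
    ⟪v, w⟫ ≤ gVal V w :=
  le_csSup ((hVfin.image _).bddAbove) ⟨v, hv, rfl⟩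

private lemma gVal_le_aux {m : ℕ} {V : Set (EuclideanSpace ℝ (Fin m))} (hVne : V.Nonempty)
    {w : EuclideanSpace ℝ (Fin m)} {t : ℝ} (h : ∀ v ∈ V, ⟪v, w⟫ ≤ t) :
    gVal V w ≤ t :=
  csSup_le (hVne.image _) (by rintro _ ⟨v, hv, rfl⟩; exact h v hv)

private lemma cornerPolyhedron_convex {m : ℕ} (V : Set (EuclideanSpace ℝ (Fin m))) :
    Convex ℝ (cornerPolyhedron V) := by
  rintro x ⟨⟨hx1, hx2⟩, hx3⟩ y ⟨⟨hy1, hy2⟩, hy3⟩ a b ha hb hab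
  refine ⟨⟨fun i => ?_, ?_⟩, fun v hv => ?_⟩
  · have : (a • x + b • y).1 i = a * x.1 i + b * y.1 i := by
      simp [Prod.fst_add, Prod.smul_fst]
    rw [this]
    exact add_nonneg (mul_nonneg ha (hx1 i)) (mul_nonneg hb (hy1 i))
  · have : ∀ i, (a • x + b • y).1 i = a * x.1 i + b * y.1 i := by
      intro i; simp [Prod.fst_add, Prod.smul_fst]
    simp only [this, Finset.sum_add_distrib, ← Finset.mul_sum, hx2, hy2, mul_one, hab]
  · have h1 : (a • x + b • y).1 = a • x.1 + b • y.1 := by simp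
    have h2 : (a • x + b • y).2 = a * x.2 + b * y.2 := by simp
    rw [h1, h2, inner_add_right, real_inner_smul_right, real_inner_smul_right]
    exact add_le_add (mul_le_mul_of_nonneg_left (hx3 v hv) ha)
      (mul_le_mul_of_nonneg_left (hy3 v hv) hb)

private lemma cornerPolyhedron_isClosed {m : ℕ} {V : Set (EuclideanSpace ℝ (Fin m))} :
    IsClosed (cornerPolyhedron V) := by
  have : cornerPolyhedron V =
      ((⋂ i, {x : EuclideanSpace ℝ (Fin m) × ℝ | 0 ≤ x.1 i}) ∩
        {x | ∑ i, x.1 i = 1}) ∩ ⋂ v ∈ V, {x | ⟪v, x.1⟫ ≤ x.2} := by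
    ext x
    simp [cornerPolyhedron, weightSimplex, and_assoc]
  rw [this]
  have hproj : ∀ i, Continuous fun x : EuclideanSpace ℝ (Fin m) × ℝ => x.1 i :=
    fun i => (EuclideanSpace.proj i).continuous.comp continuous_fst
  refine IsClosed.inter (IsClosed.inter ?_ ?_) ?_
  · exact isClosed_iInter fun i => isClosed_le continuous_const (hproj i)
  · exact isClosed_eq (continuous_finset_sum _ fun i _ => hproj i) continuous_const
  · exact isClosed_biInter fun v hv =>
      isClosed_le (Continuous.inner continuous_const continuous_fst) continuous_snd

/-- If the utility loss `g_F(w) − g_V(w)` is at most `ε` at every corner weight of `V`,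
then it is at most `ε` at every weight in the simplex, i.e. `V` is an `ε`-CCS. -/
theorem epsCCS_of_corner_weights {m : ℕ}
    (F V : Set (EuclideanSpace ℝ (Fin m)))
    (hFfin : F.Finite) (hFne : F.Nonempty) (hVfin : V.Finite) (hVne : V.Nonempty)
    (ε : ℝ) (hε : 0 ≤ ε)
    (h : ∀ w, IsCornerWeight V w → gVal F w - gVal V w ≤ ε) :
    ∀ w ∈ weightSimplex m, gVal F w - gVal V w ≤ ε := by
  classical
  intro w hw
  obtain ⟨v0, hv0⟩ := hVne
  obtain ⟨f0, hf0⟩ := hFne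
  -- norm bounds
  set CV : ℝ := hVfin.toFinset.sup' ⟨v0, hVfin.mem_toFinset.2 hv0⟩ (fun v => ‖v‖) with hCVdef
  set CF : ℝ := hFfin.toFinset.sup' ⟨f0, hFfin.mem_toFinset.2 hf0⟩ (fun v => ‖v‖) with hCFdef
  have hCV0 : 0 ≤ CV :=
    le_trans (norm_nonneg v0) (Finset.le_sup' _ (hVfin.mem_toFinset.2 hv0))
  have hCF0 : 0 ≤ CF :=
    le_trans (norm_nonneg f0) (Finset.le_sup' _ (hFfin.mem_toFinset.2 hf0))
  have hCVle : ∀ v ∈ V, ‖v‖ ≤ CV := fun v hv => Finset.le_sup' _ (hVfin.mem_toFinset.2 hv)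
  have hCFle : ∀ v ∈ F, ‖v‖ ≤ CF := fun v hv => Finset.le_sup' _ (hFfin.mem_toFinset.2 hv)
  -- weights in the simplex have norm at most 1
  have hnorm : ∀ u ∈ weightSimplex m, ‖u‖ ≤ (1 : ℝ) := by
    rintro u ⟨hu1, hu2⟩
    rw [EuclideanSpace.norm_eq]
    refine Real.sqrt_le_one.mpr ?_
    calc ∑ i, ‖u i‖ ^ 2 ≤ ∑ i, u i := by
            refine Finset.sum_le_sum fun i _ => ?_
            rw [Real.norm_eq_abs, sq_abs]
            have hui1 : u i ≤ 1 := by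
              rw [← hu2]
              exact Finset.single_le_sum (fun j _ => hu1 j) (Finset.mem_univ i)
            nlinarith [hu1 i]
      _ = 1 := hu2
  have hgV_bound : ∀ u ∈ weightSimplex m, gVal V u ≤ CV := by
    intro u hu
    refine gVal_le_aux ⟨v0, hv0⟩ fun v hv => ?_
    calc ⟪v, u⟫ ≤ ‖v‖ * ‖u‖ := real_inner_le_norm v u
      _ ≤ CV * 1 := mul_le_mul (hCVle v hv) (hnorm u hu) (norm_nonneg u) hCV0
      _ = CV := mul_one CV
  have hgF_bound : ∀ u ∈ weightSimplex m, gVal F u ≤ CF := by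
    intro u hu
    refine gVal_le_aux ⟨f0, hf0⟩ fun v hv => ?_
    calc ⟪v, u⟫ ≤ ‖v‖ * ‖u‖ := real_inner_le_norm v u
      _ ≤ CF * 1 := mul_le_mul (hCFle v hv) (hnorm u hu) (norm_nonneg u) hCF0
      _ = CF := mul_one CF
  set T : ℝ := CV + CF with hTdef
  set P : Set (EuclideanSpace ℝ (Fin m) × ℝ) :=
    cornerPolyhedron V ∩ {x | x.2 ≤ T} with hPdef
  have hPsub : P ⊆ cornerPolyhedron V := Set.inter_subset_left
  -- convexity
  have hPconv : Convex ℝ P := by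
    refine (cornerPolyhedron_convex V).inter ?_
    rintro x hx y hy a b ha hb hab
    have : (a • x + b • y).2 = a * x.2 + b * y.2 := by simp
    simp only [Set.mem_setOf_eq] at hx hy ⊢
    rw [this]
    calc a * x.2 + b * y.2 ≤ a * T + b * T :=
          add_le_add (mul_le_mul_of_nonneg_left hx ha) (mul_le_mul_of_nonneg_left hy hb)
      _ = T := by rw [← add_mul, hab, one_mul]
  -- closedness
  have hPclosed : IsClosed P :=
    cornerPolyhedron_isClosed.inter (isClosed_le continuous_snd continuous_const)
  -- boundedness and compactness
  have hPbdd : Bornology.IsBounded P := by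
    refine (Metric.isBounded_closedBall (x := (0 : EuclideanSpace ℝ (Fin m) × ℝ))
      (r := 1 + |T| + CV)).subset ?_
    rintro ⟨u, t⟩ ⟨⟨hu, hut⟩, ht⟩
    rw [Metric.mem_closedBall, dist_zero_right, Prod.norm_def]
    have h1 : ‖u‖ ≤ 1 + |T| + CV := by
      have := hnorm u hu
      have := abs_nonneg T
      linarith
    have h2 : ‖t‖ ≤ 1 + |T| + CV := by
      rw [Real.norm_eq_abs, abs_le]
      constructor
      · have hv0t : ⟪v0, u⟫ ≤ t := hut v0 hv0
        have : -(‖v0‖ * ‖u‖) ≤ ⟪v0, u⟫ := neg_le_of_abs_le (abs_real_inner_le_norm v0 u)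
        have hn : ‖v0‖ * ‖u‖ ≤ CV * 1 :=
          mul_le_mul (hCVle v0 hv0) (hnorm u hu) (norm_nonneg u) hCV0
        have := abs_nonneg T
        linarith
      · have := ht
        simp only [Set.mem_setOf_eq] at this
        have := le_abs_self T
        linarith
    exact max_le h1 h2
  have hPcomp : IsCompact P := Metric.isCompact_of_isClosed_isBounded hPclosed hPbdd
  -- the point of interest lies in P
  have hxP : (w, gVal V w) ∈ P := by
    refine ⟨⟨hw, fun v hv => le_gVal_aux hVfin hv w⟩, ?_⟩
    simp only [Set.mem_setOf_eq]
    calc gVal V w ≤ CV := hgV_bound w hw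
      _ ≤ T := by rw [hTdef]; linarith
  -- extreme points of P satisfy the target inequality
  have hExt : ∀ x ∈ P.extremePoints ℝ, gVal F x.1 - x.2 ≤ ε := by
    rintro x hxE
    obtain ⟨hxP', hxext⟩ := hxE
    obtain ⟨⟨hxsimplex, hxineq⟩, hxT⟩ := hxP'
    simp only [Set.mem_setOf_eq] at hxT
    rcases eq_or_lt_of_le hxT with hxT | hxT
    · -- case x.2 = T
      have := hgF_bound x.1 hxsimplex
      rw [hxT, hTdef]
      linarith
    · -- case x.2 < T : x is an extreme point of the corner polyhedron
      -- first, x.2 = gVal V x.1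
      have hge : gVal V x.1 ≤ x.2 := gVal_le_aux ⟨v0, hv0⟩ hxineq
      have heq : x.2 = gVal V x.1 := by
        by_contra hne
        have hlt : gVal V x.1 < x.2 := lt_of_le_of_ne hge (fun hh => hne hh.symm)
        set δ : ℝ := min (x.2 - gVal V x.1) (T - x.2) with hδdef
        have hδ0 : 0 < δ := lt_min (by linarith) (by linarith)
        have hy : (x.1, x.2 - δ) ∈ P := by
          refine ⟨⟨hxsimplex, fun v hv => ?_⟩, ?_⟩
          · have h1 : ⟪v, x.1⟫ ≤ gVal V x.1 := le_gVal_aux hVfin hv x.1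
            have h2 : δ ≤ x.2 - gVal V x.1 := min_le_left _ _
            simp only [Set.mem_setOf_eq]
            linarith
          · simp only [Set.mem_setOf_eq]
            linarith
        have hz : (x.1, x.2 + δ) ∈ P := by
          refine ⟨⟨hxsimplex, fun v hv => ?_⟩, ?_⟩
          · have h1 : ⟪v, x.1⟫ ≤ x.2 := hxineq v hv
            simp only [Set.mem_setOf_eq]
            linarith
          · have h2 : δ ≤ T - x.2 := min_le_right _ _
            simp only [Set.mem_setOf_eq]
            linarith
        have hmem : x ∈ openSegment ℝ ((x.1, x.2 - δ)) ((x.1, x.2 + δ)) := by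
          refine ⟨1/2, 1/2, by norm_num, by norm_num, by norm_num, ?_⟩
          ext
          · show ((1:ℝ)/2) • x.1 _ + ((1:ℝ)/2) • x.1 _ = x.1 _
            simp; ring
          · show (1:ℝ)/2 * (x.2 - δ) + (1:ℝ)/2 * (x.2 + δ) = x.2
            ring
        have hy' := hxext hy hz hmem
        have : x.2 - δ = x.2 := congrArg Prod.snd hy'
        linarith
      -- now show extremality in the corner polyhedron
      have hxCP : x ∈ (cornerPolyhedron V).extremePoints ℝ := by
        refine mem_extremePoints.2 ⟨⟨hxsimplex, hxineq⟩, ?_⟩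
        rintro y hy z hz ⟨a, b, ha, hb, hab, hsum⟩
        set D : ℝ := (T - x.2) + |y.2 - x.2| + |z.2 - x.2| with hDdef
        have hTx : 0 < T - x.2 := by linarith
        have hD0 : 0 < D := by positivity
        set s : ℝ := (T - x.2) / D with hsdef
        have hs0 : 0 < s := div_pos hTx hD0
        have hs1 : s ≤ 1 := by
          rw [div_le_one hD0, hDdef]
          have := abs_nonneg (y.2 - x.2); have := abs_nonneg (z.2 - x.2); linarith
        have hsy : s * |y.2 - x.2| ≤ T - x.2 := by
          rw [hsdef, div_mul_eq_mul_div, div_le_iff₀ hD0]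
          refine mul_le_mul_of_nonneg_left ?_ (le_of_lt hTx)
          rw [hDdef]; have := abs_nonneg (z.2 - x.2); linarith [hTx]
        have hsz : s * |z.2 - x.2| ≤ T - x.2 := by
          rw [hsdef, div_mul_eq_mul_div, div_le_iff₀ hD0]
          refine mul_le_mul_of_nonneg_left ?_ (le_of_lt hTx)
          rw [hDdef]; have := abs_nonneg (y.2 - x.2); linarith [hTx]
        set y' := x + s • (y - x) with hy'def
        set z' := x + s • (z - x) with hz'def
        have hy'2 : y'.2 = x.2 + s * (y.2 - x.2) := by simp [hy'def]
        have hz'2 : z'.2 = x.2 + s * (z.2 - x.2) := by simp [hz'def]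
        have hy'P : y' ∈ P := by
          refine ⟨?_, ?_⟩
          · have : y' = (1 - s) • x + s • y := by rw [hy'def]; module
            rw [this]
            exact cornerPolyhedron_convex V ⟨hxsimplex, hxineq⟩ hy
              (by linarith) (le_of_lt hs0) (by ring)
          · simp only [Set.mem_setOf_eq, hy'2]
            have : s * (y.2 - x.2) ≤ s * |y.2 - x.2| :=
              mul_le_mul_of_nonneg_left (le_abs_self _) (le_of_lt hs0)
            linarith
        have hz'P : z' ∈ P := by
          refine ⟨?_, ?_⟩
          · have : z' = (1 - s) • x + s • z := by rw [hz'def]; module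
            rw [this]
            exact cornerPolyhedron_convex V ⟨hxsimplex, hxineq⟩ hz
              (by linarith) (le_of_lt hs0) (by ring)
          · simp only [Set.mem_setOf_eq, hz'2]
            have : s * (z.2 - x.2) ≤ s * |z.2 - x.2| :=
              mul_le_mul_of_nonneg_left (le_abs_self _) (le_of_lt hs0)
            linarith
        have hmem : x ∈ openSegment ℝ y' z' := by
          refine ⟨a, b, ha, hb, hab, ?_⟩
          have key : a • y' + b • z' = (a + b) • x + s • ((a • y + b • z) - (a + b) • x) := by
            rw [hy'def, hz'def]; module
          rw [key, hab, hsum, one_smul, sub_self, smul_zero, add_zero]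
        obtain ⟨hy'x, hz'x⟩ := (mem_extremePoints.1 (show x ∈ P.extremePoints ℝ from ⟨⟨⟨hxsimplex, hxineq⟩, le_of_lt hxT⟩, hxext⟩)).2 _ hy'P _ hz'P hmem
        constructor
        · have : s • (y - x) = 0 := by
            have := hy'x
            rw [hy'def] at this
            rwa [add_eq_left] at this
          rcases smul_eq_zero.1 this with hs | hyx
          · exact absurd hs (ne_of_gt hs0)
          · rw [sub_eq_zero] at hyx; exact hyx
        · have : s • (z - x) = 0 := by
            have := hz'x
            rw [hz'def] at this
            rwa [add_eq_left] at this
          rcases smul_eq_zero.1 this with hs | hzx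
          · exact absurd hs (ne_of_gt hs0)
          · rw [sub_eq_zero] at hzx; exact hzx
      have hcw : IsCornerWeight V x.1 := by
        refine ⟨hxsimplex, ?_⟩
        have : (x.1, gVal V x.1) = x := by
          rw [← heq]
        rw [this]
        exact hxCP
      have := h x.1 hcw
      rw [heq]
      linarith
  -- Krein-Milman and half-space argument
  set S : Set (EuclideanSpace ℝ (Fin m) × ℝ) :=
    ⋂ v ∈ F, {x | ⟪v, x.1⟫ ≤ x.2 + ε} with hSdef
  have hSconv : Convex ℝ S := by
    refine convex_iInter fun v => convex_iInter fun hv => ?_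
    rintro x hx y hy a b ha hb hab
    simp only [Set.mem_setOf_eq] at hx hy ⊢
    have h1 : (a • x + b • y).1 = a • x.1 + b • y.1 := by simp
    have h2 : (a • x + b • y).2 = a * x.2 + b * y.2 := by simp
    rw [h1, h2, inner_add_right, real_inner_smul_right, real_inner_smul_right]
    have := mul_le_mul_of_nonneg_left hx ha
    have := mul_le_mul_of_nonneg_left hy hb
    nlinarith
  have hSclosed : IsClosed S :=
    isClosed_biInter fun v hv =>
      isClosed_le (Continuous.inner continuous_const continuous_fst)
        (continuous_snd.add continuous_const)
  have hES : P.extremePoints ℝ ⊆ S := by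
    intro x hx
    have hb := hExt x hx
    simp only [hSdef, Set.mem_iInter, Set.mem_setOf_eq]
    intro v hv
    have := le_gVal_aux hFfin hv x.1
    linarith
  have hPS : P ⊆ S := by
    rw [← closure_convexHull_extremePoints hPcomp hPconv]
    exact closure_minimal (convexHull_min hES hSconv) hSclosed
  have := hPS hxP
  simp only [hSdef, Set.mem_iInter, Set.mem_setOf_eq] at this
  have hfinal : gVal F w ≤ gVal V w + ε := gVal_le_aux ⟨f0, hf0⟩ this
  linarith
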